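/- Let k ≥ ℓ ≥ 0, m ≥ 0, and let σ ∈ S_{k+ℓ+m} lie in the product set R·C·R'·C (with A₁, A₂, A₃, R, C, R' as in the two-row setting). Suppose r = |{ i ∈ [ℓ+1,k] ∪ A₃ : σ(i) ∈ A₁ }| and s = |{ j ∈ A₂ : σ(j) ∉ A₂ and σ(j−k) ∉ A₂ }|, and that the transposition (σ(j−k), σ(j)) does not lie in R for any j ∈ A₂. Then r ≥ k − ℓ and r + s ≤ min(k, k − ℓ + m). -/

import Mathlib

open Equiv Finset
open scoped Pointwise

/-- Block index of a value (0-indexed): `0` for `A₁ = [0,k)`, `1` for `A₂ = [k, k+ℓ)`,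
`2` for `A₃ = [k+ℓ, k+ℓ+m)`. -/
def blk (k l x : ℕ) : ℕ := if x < k then 0 else if x < k + l then 1 else 2

/-- `R = S_{A₁} × S_{A₂} × S_{A₃}`: permutations preserving each block. -/
def Rset (k l m : ℕ) : Set (Perm (Fin (k + l + m))) :=
  {σ | ∀ x, blk k l (σ x : ℕ) = blk k l (x : ℕ)}

/-- `R' = S_{A₁ ∪ A₃} × S_{A₂}`: permutations preserving `A₂` (and hence `A₁ ∪ A₃`). -/
def R'set (k l m : ℕ) : Set (Perm (Fin (k + l + m))) :=
  {σ | ∀ x, blk k l (σ x : ℕ) = 1 ↔ blk k l (x : ℕ) = 1}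

/-- `C = ⟨(j-k, j) : j ∈ A₂⟩`, the elementary abelian 2-group generated by the
transpositions `(i, k+i)` for `i < ℓ` (0-indexed). -/
def Cgrp (k l m : ℕ) : Subgroup (Perm (Fin (k + l + m))) :=
  Subgroup.closure {τ | ∃ (i : ℕ) (h : i < l),
    τ = Equiv.swap (⟨i, by omega⟩ : Fin (k + l + m)) ⟨k + i, by omega⟩}

private lemma blk_eq_zero_iff (k l x : ℕ) : blk k l x = 0 ↔ x < k := by
  unfold blk; split_ifs <;> first | omega | simp_all

private lemma blk_eq_one_iff (k l x : ℕ) : blk k l x = 1 ↔ (¬ x < k ∧ x < k + l) := by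
  unfold blk; split_ifs <;> first | omega | simp_all

private lemma blk_lt_three (k l x : ℕ) : blk k l x < 3 := by
  unfold blk; split_ifs <;> omega

/-- The canonical "partner" map `j ↦ j - k`. -/
private def pre (k l m : ℕ) (j : Fin (k + l + m)) : Fin (k + l + m) :=
  ⟨(j : ℕ) - k, by have := j.isLt; omega⟩

private lemma pre_val (k l m : ℕ) (j : Fin (k + l + m)) :
    ((pre k l m j : Fin (k + l + m)) : ℕ) = (j : ℕ) - k := rfl

/-- For `σ ∈ R·C·R'·C` such that `σ(j-k)` and `σ(j)` never lie in the same block for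
`j ∈ A₂`: with `r = |{i ∈ [ℓ+1,k] ∪ A₃ : σ(i) ∈ A₁}|` and
`s = |{j ∈ A₂ : σ(j) ∉ A₂ and σ(j-k) ∉ A₂}|`, one has `r ≥ k - ℓ` and
`r + s ≤ min(k, k - ℓ + m)`. -/
theorem r_s_bounds (k l m : ℕ) (hkl : l ≤ k) (σ : Perm (Fin (k + l + m)))
    (hσ : σ ∈ Rset k l m * (Cgrp k l m : Set (Perm (Fin (k + l + m)))) * R'set k l m *
        (Cgrp k l m : Set (Perm (Fin (k + l + m)))))
    (hblocks : ∀ (j : ℕ) (h1 : k ≤ j) (h2 : j < k + l),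
      blk k l ((σ ⟨j - k, by omega⟩ : Fin (k + l + m)) : ℕ) ≠
        blk k l ((σ ⟨j, by omega⟩ : Fin (k + l + m)) : ℕ))
    (r s : ℕ)
    (hr : r = (univ.filter (fun i : Fin (k + l + m) =>
        ((l ≤ (i : ℕ) ∧ (i : ℕ) < k) ∨ k + l ≤ (i : ℕ)) ∧ ((σ i : Fin (k + l + m)) : ℕ) < k)).card)
    (hs : s = (univ.filter (fun j : Fin (k + l + m) =>
        k ≤ (j : ℕ) ∧ (j : ℕ) < k + l ∧ blk k l ((σ j : Fin (k + l + m)) : ℕ) ≠ 1 ∧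
          blk k l ((σ ⟨(j : ℕ) - k, by have := j.isLt; omega⟩ : Fin (k + l + m)) : ℕ) ≠ 1)).card) :
    k - l ≤ r ∧ r + s ≤ min k (k - l + m) := by
  clear hσ
  have hmk : ∀ (x : ℕ) (p : x < k + l + m) (a : Fin (k + l + m)), x = (a : ℕ) →
      σ ⟨x, p⟩ = σ a := fun x p a h => congrArg σ (Fin.ext h)
  have hσpre : ∀ (x y : Fin (k + l + m)), ((pre k l m x : Fin (k + l + m)) : ℕ) = (y : ℕ) →
      σ (pre k l m x) = σ y := fun x y h => congrArg σ (Fin.ext h)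
  have hpair : ∀ (a b : Fin (k + l + m)), (a : ℕ) + k = (b : ℕ) → (b : ℕ) < k + l →
      blk k l ((σ a : Fin (k + l + m)) : ℕ) ≠ blk k l ((σ b : Fin (k + l + m)) : ℕ) := by
    intro a b hab hbl
    have h := hblocks (b : ℕ) (by omega) hbl
    rw [hmk ((b : ℕ) - k) (by have := b.isLt; omega) a (by omega), hmk (b : ℕ) b.isLt b rfl] at h
    exact h
  -- replace the `s`-set by a version using `pre`
  have hsimp : (univ.filter (fun j : Fin (k + l + m) =>
        k ≤ (j : ℕ) ∧ (j : ℕ) < k + l ∧ blk k l ((σ j : Fin (k + l + m)) : ℕ) ≠ 1 ∧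
          blk k l ((σ ⟨(j : ℕ) - k, by have := j.isLt; omega⟩ : Fin (k + l + m)) : ℕ) ≠ 1))
      = (univ.filter (fun j : Fin (k + l + m) =>
        k ≤ (j : ℕ) ∧ (j : ℕ) < k + l ∧ blk k l ((σ j : Fin (k + l + m)) : ℕ) ≠ 1 ∧
          blk k l ((σ (pre k l m j) : Fin (k + l + m)) : ℕ) ≠ 1)) := by
    apply Finset.filter_congr
    intro j _
    rw [hmk ((j : ℕ) - k) (by have := j.isLt; omega) (pre k l m j) rfl]
  have hs' : s = (univ.filter (fun j : Fin (k + l + m) =>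
        k ≤ (j : ℕ) ∧ (j : ℕ) < k + l ∧ blk k l ((σ j : Fin (k + l + m)) : ℕ) ≠ 1 ∧
          blk k l ((σ (pre k l m j) : Fin (k + l + m)) : ℕ) ≠ 1)).card := by
    rw [hs, hsimp]
  clear hs hsimp hblocks
  -- cardinality of σ⁻¹(A₁)
  have hS0 : (univ.filter (fun i : Fin (k + l + m) =>
      ((σ i : Fin (k + l + m)) : ℕ) < k)).card = k := by
    have h1 : (univ.filter (fun i : Fin (k + l + m) =>
        ((σ i : Fin (k + l + m)) : ℕ) < k)).card = (Finset.range k).card := by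
      apply Finset.card_bij (fun i _ => ((σ i : Fin (k + l + m)) : ℕ))
      · intro a ha
        simp only [Finset.mem_filter, Finset.mem_univ, true_and] at ha
        simpa only [Finset.mem_range] using ha
      · intro a _ b _ h
        exact σ.injective (Fin.ext h)
      · intro b hb
        simp only [Finset.mem_range] at hb
        refine ⟨σ⁻¹ ⟨b, by omega⟩, ?_, by simp⟩
        simp only [Finset.mem_filter, Finset.mem_univ, true_and, Equiv.Perm.inv_def, Equiv.apply_symm_apply]
        exact hb
    rw [h1, Finset.card_range]
  -- cardinality of σ⁻¹(A₂)
  have hS1 : (univ.filter (fun i : Fin (k + l + m) =>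
      blk k l ((σ i : Fin (k + l + m)) : ℕ) = 1)).card = l := by
    have h1 : (univ.filter (fun i : Fin (k + l + m) =>
        blk k l ((σ i : Fin (k + l + m)) : ℕ) = 1)).card = (Finset.Ico k (k + l)).card := by
      apply Finset.card_bij (fun i _ => ((σ i : Fin (k + l + m)) : ℕ))
      · intro a ha
        simp only [Finset.mem_filter, Finset.mem_univ, true_and, blk_eq_one_iff] at ha
        simp only [Finset.mem_Ico]
        omega
      · intro a _ b _ h
        exact σ.injective (Fin.ext h)
      · intro b hb
        simp only [Finset.mem_Ico] at hb
        refine ⟨σ⁻¹ ⟨b, by omega⟩, ?_, by simp⟩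
        simp only [Finset.mem_filter, Finset.mem_univ, true_and, Equiv.Perm.inv_def, Equiv.apply_symm_apply,
          blk_eq_one_iff]
        omega
    rw [h1, Nat.card_Ico]
    omega
  -- cardinality of the index region D = [l,k) ∪ [k+l, k+l+m)
  have hD : (univ.filter (fun i : Fin (k + l + m) =>
      (l ≤ (i : ℕ) ∧ (i : ℕ) < k) ∨ k + l ≤ (i : ℕ))).card = k - l + m := by
    have h1 : (univ.filter (fun i : Fin (k + l + m) =>
        (l ≤ (i : ℕ) ∧ (i : ℕ) < k) ∨ k + l ≤ (i : ℕ))).card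
        = (Finset.Ico l k ∪ Finset.Ico (k + l) (k + l + m)).card := by
      apply Finset.card_bij (fun (i : Fin (k + l + m)) _ => (i : ℕ))
      · intro a ha
        simp only [Finset.mem_filter, Finset.mem_univ, true_and] at ha
        simp only [Finset.mem_union, Finset.mem_Ico]
        have := a.isLt
        omega
      · intro a _ b _ h
        exact Fin.ext h
      · intro b hb
        simp only [Finset.mem_union, Finset.mem_Ico] at hb
        refine ⟨⟨b, by omega⟩, ?_, rfl⟩
        simp only [Finset.mem_filter, Finset.mem_univ, true_and]
        omega
    rw [h1, Finset.card_union_of_disjoint, Nat.card_Ico, Nat.card_Ico]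
    · omega
    · rw [Finset.disjoint_left]
      intro a ha hb
      simp only [Finset.mem_Ico] at ha hb
      omega
  -- f1 : r + |LA2 ∩ σ⁻¹(A₁)| = k
  have f1 : (univ.filter (fun i : Fin (k + l + m) =>
        ((l ≤ (i : ℕ) ∧ (i : ℕ) < k) ∨ k + l ≤ (i : ℕ)) ∧ ((σ i : Fin (k + l + m)) : ℕ) < k)).card
      + (univ.filter (fun i : Fin (k + l + m) =>
        ((i : ℕ) < l ∨ (k ≤ (i : ℕ) ∧ (i : ℕ) < k + l)) ∧
          ((σ i : Fin (k + l + m)) : ℕ) < k)).card = k := by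
    rw [← Finset.card_union_of_disjoint (by
      rw [Finset.disjoint_left]
      intro a ha hb
      simp only [Finset.mem_filter, Finset.mem_univ, true_and] at ha hb
      omega)]
    rw [show (univ.filter (fun i : Fin (k + l + m) =>
          ((l ≤ (i : ℕ) ∧ (i : ℕ) < k) ∨ k + l ≤ (i : ℕ)) ∧ ((σ i : Fin (k + l + m)) : ℕ) < k))
        ∪ (univ.filter (fun i : Fin (k + l + m) =>
          ((i : ℕ) < l ∨ (k ≤ (i : ℕ) ∧ (i : ℕ) < k + l)) ∧
            ((σ i : Fin (k + l + m)) : ℕ) < k))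
        = univ.filter (fun i : Fin (k + l + m) => ((σ i : Fin (k + l + m)) : ℕ) < k) from by
      ext x
      simp only [Finset.mem_union, Finset.mem_filter, Finset.mem_univ, true_and]
      have hx := x.isLt
      constructor
      · rintro (⟨_, h⟩ | ⟨_, h⟩) <;> exact h
      · intro h
        by_cases hc : (l ≤ (x : ℕ) ∧ (x : ℕ) < k) ∨ k + l ≤ (x : ℕ)
        · exact Or.inl ⟨hc, h⟩
        · exact Or.inr ⟨by omega, h⟩]
    exact hS0
  -- f2 : |LA2 ∩ σ⁻¹(A₁)| ≤ l
  have f2 : (univ.filter (fun i : Fin (k + l + m) =>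
        ((i : ℕ) < l ∨ (k ≤ (i : ℕ) ∧ (i : ℕ) < k + l)) ∧
          ((σ i : Fin (k + l + m)) : ℕ) < k)).card ≤ l := by
    have h1 : (univ.filter (fun i : Fin (k + l + m) =>
        ((i : ℕ) < l ∨ (k ≤ (i : ℕ) ∧ (i : ℕ) < k + l)) ∧
          ((σ i : Fin (k + l + m)) : ℕ) < k)).card ≤ (Finset.range l).card := by
      apply Finset.card_le_card_of_injOn
        (fun i : Fin (k + l + m) => if (i : ℕ) < l then (i : ℕ) else (i : ℕ) - k)
      · intro a ha
        simp only [Finset.mem_coe, Finset.mem_filter, Finset.mem_univ, true_and] at ha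
        show (if (a : ℕ) < l then (a : ℕ) else (a : ℕ) - k) ∈ Finset.range l
        simp only [Finset.mem_range]
        split_ifs with h
        · exact h
        · omega
      · intro a ha b hb hab
        simp only [Finset.mem_coe, Finset.mem_filter, Finset.mem_univ, true_and] at ha hb
        replace hab : (if (a : ℕ) < l then (a : ℕ) else (a : ℕ) - k)
            = (if (b : ℕ) < l then (b : ℕ) else (b : ℕ) - k) := hab
        by_cases h1 : (a : ℕ) < l
        · by_cases h2 : (b : ℕ) < l
          · rw [if_pos h1, if_pos h2] at hab
            exact Fin.ext hab
          · rw [if_pos h1, if_neg h2] at hab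
            exact absurd (((blk_eq_zero_iff k l _).mpr ha.2).trans
                ((blk_eq_zero_iff k l _).mpr hb.2).symm)
              (hpair a b (by omega) (by omega))
        · by_cases h2 : (b : ℕ) < l
          · rw [if_neg h1, if_pos h2] at hab
            exact absurd (((blk_eq_zero_iff k l _).mpr hb.2).trans
                ((blk_eq_zero_iff k l _).mpr ha.2).symm)
              (hpair b a (by omega) (by omega))
          · rw [if_neg h1, if_neg h2] at hab
            exact Fin.ext (by omega)
    simpa only [Finset.card_range] using h1
  -- f3 : s ≤ |LA2 ∩ σ⁻¹(A₁)|
  have f3 : (univ.filter (fun j : Fin (k + l + m) =>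
        k ≤ (j : ℕ) ∧ (j : ℕ) < k + l ∧ blk k l ((σ j : Fin (k + l + m)) : ℕ) ≠ 1 ∧
          blk k l ((σ (pre k l m j) : Fin (k + l + m)) : ℕ) ≠ 1)).card
      ≤ (univ.filter (fun i : Fin (k + l + m) =>
        ((i : ℕ) < l ∨ (k ≤ (i : ℕ) ∧ (i : ℕ) < k + l)) ∧
          ((σ i : Fin (k + l + m)) : ℕ) < k)).card := by
    apply Finset.card_le_card_of_injOn
      (fun j : Fin (k + l + m) =>
        if ((σ j : Fin (k + l + m)) : ℕ) < k then j else pre k l m j)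
    · intro j hj
      simp only [Finset.mem_coe, Finset.mem_filter, Finset.mem_univ, true_and] at hj
      obtain ⟨hj1, hj2, hj3, hj4⟩ := hj
      show (if ((σ j : Fin (k + l + m)) : ℕ) < k then j else pre k l m j) ∈ _
      have hne := hpair (pre k l m j) j (by rw [pre_val]; omega) (by omega)
      have e0 := blk_eq_zero_iff k l ((σ (pre k l m j) : Fin (k + l + m)) : ℕ)
      have e0' := blk_eq_zero_iff k l ((σ j : Fin (k + l + m)) : ℕ)
      have e3 := blk_lt_three k l ((σ (pre k l m j) : Fin (k + l + m)) : ℕ)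
      have e3' := blk_lt_three k l ((σ j : Fin (k + l + m)) : ℕ)
      by_cases hc : ((σ j : Fin (k + l + m)) : ℕ) < k
      · rw [if_pos hc]
        simp only [Finset.mem_coe, Finset.mem_filter, Finset.mem_univ, true_and]
        exact ⟨Or.inr ⟨hj1, hj2⟩, hc⟩
      · rw [if_neg hc]
        simp only [Finset.mem_coe, Finset.mem_filter, Finset.mem_univ, true_and, pre_val]
        constructor
        · left; omega
        · omega
    · intro a ha b hb hab
      simp only [Finset.mem_coe, Finset.mem_filter, Finset.mem_univ, true_and] at ha hb
      replace hab : (if ((σ a : Fin (k + l + m)) : ℕ) < k then a else pre k l m a)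
          = (if ((σ b : Fin (k + l + m)) : ℕ) < k then b else pre k l m b) := hab
      by_cases h1 : ((σ a : Fin (k + l + m)) : ℕ) < k
      · by_cases h2 : ((σ b : Fin (k + l + m)) : ℕ) < k
        · rw [if_pos h1, if_pos h2] at hab
          exact hab
        · rw [if_pos h1, if_neg h2] at hab
          have hv := congrArg Fin.val hab
          rw [pre_val] at hv
          exfalso
          omega
      · by_cases h2 : ((σ b : Fin (k + l + m)) : ℕ) < k
        · rw [if_neg h1, if_pos h2] at hab
          have hv := congrArg Fin.val hab
          rw [pre_val] at hv
          exfalso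
          omega
        · rw [if_neg h1, if_neg h2] at hab
          have := congrArg Fin.val hab
          rw [pre_val, pre_val] at this
          exact Fin.ext (by omega)
  -- split of σ⁻¹(A₂) into the D part and the LA2 part
  have hsplit : (univ.filter (fun i : Fin (k + l + m) =>
        ((l ≤ (i : ℕ) ∧ (i : ℕ) < k) ∨ k + l ≤ (i : ℕ)) ∧
          blk k l ((σ i : Fin (k + l + m)) : ℕ) = 1)).card
      + (univ.filter (fun i : Fin (k + l + m) =>
        ((i : ℕ) < l ∨ (k ≤ (i : ℕ) ∧ (i : ℕ) < k + l)) ∧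
          blk k l ((σ i : Fin (k + l + m)) : ℕ) = 1)).card = l := by
    rw [← Finset.card_union_of_disjoint (by
      rw [Finset.disjoint_left]
      intro a ha hb
      simp only [Finset.mem_filter, Finset.mem_univ, true_and] at ha hb
      omega)]
    rw [show (univ.filter (fun i : Fin (k + l + m) =>
          ((l ≤ (i : ℕ) ∧ (i : ℕ) < k) ∨ k + l ≤ (i : ℕ)) ∧
            blk k l ((σ i : Fin (k + l + m)) : ℕ) = 1))
        ∪ (univ.filter (fun i : Fin (k + l + m) =>
          ((i : ℕ) < l ∨ (k ≤ (i : ℕ) ∧ (i : ℕ) < k + l)) ∧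
            blk k l ((σ i : Fin (k + l + m)) : ℕ) = 1))
        = univ.filter (fun i : Fin (k + l + m) =>
            blk k l ((σ i : Fin (k + l + m)) : ℕ) = 1) from by
      ext x
      simp only [Finset.mem_union, Finset.mem_filter, Finset.mem_univ, true_and]
      have hx := x.isLt
      constructor
      · rintro (⟨_, h⟩ | ⟨_, h⟩) <;> exact h
      · intro h
        by_cases hc : (l ≤ (x : ℕ) ∧ (x : ℕ) < k) ∨ k + l ≤ (x : ℕ)
        · exact Or.inl ⟨hc, h⟩
        · exact Or.inr ⟨by omega, h⟩]
    exact hS1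
  -- s + |LA2 ∩ σ⁻¹(A₂)| ≤ l
  have hsu : (univ.filter (fun j : Fin (k + l + m) =>
        k ≤ (j : ℕ) ∧ (j : ℕ) < k + l ∧ blk k l ((σ j : Fin (k + l + m)) : ℕ) ≠ 1 ∧
          blk k l ((σ (pre k l m j) : Fin (k + l + m)) : ℕ) ≠ 1)).card
      + (univ.filter (fun i : Fin (k + l + m) =>
        ((i : ℕ) < l ∨ (k ≤ (i : ℕ) ∧ (i : ℕ) < k + l)) ∧
          blk k l ((σ i : Fin (k + l + m)) : ℕ) = 1)).card ≤ l := by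
    rw [← Finset.card_union_of_disjoint (by
      rw [Finset.disjoint_left]
      intro a ha hb
      simp only [Finset.mem_filter, Finset.mem_univ, true_and] at ha hb
      exact ha.2.2.1 hb.2)]
    have h1 : ((univ.filter (fun j : Fin (k + l + m) =>
          k ≤ (j : ℕ) ∧ (j : ℕ) < k + l ∧ blk k l ((σ j : Fin (k + l + m)) : ℕ) ≠ 1 ∧
            blk k l ((σ (pre k l m j) : Fin (k + l + m)) : ℕ) ≠ 1))
        ∪ (univ.filter (fun i : Fin (k + l + m) =>
          ((i : ℕ) < l ∨ (k ≤ (i : ℕ) ∧ (i : ℕ) < k + l)) ∧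
            blk k l ((σ i : Fin (k + l + m)) : ℕ) = 1))).card ≤ (Finset.range l).card := by
      apply Finset.card_le_card_of_injOn
        (fun i : Fin (k + l + m) => if (i : ℕ) < l then (i : ℕ) else (i : ℕ) - k)
      · intro a ha
        simp only [Finset.mem_coe, Finset.mem_union, Finset.mem_filter, Finset.mem_univ, true_and] at ha
        show (if (a : ℕ) < l then (a : ℕ) else (a : ℕ) - k) ∈ Finset.range l
        simp only [Finset.mem_range]
        split_ifs with h
        · exact h
        · rcases ha with h' | h' <;> omega
      · intro a ha b hb hab
        simp only [Finset.mem_coe, Finset.mem_union, Finset.mem_filter, Finset.mem_univ,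
          true_and] at ha hb
        replace hab : (if (a : ℕ) < l then (a : ℕ) else (a : ℕ) - k)
            = (if (b : ℕ) < l then (b : ℕ) else (b : ℕ) - k) := hab
        by_cases h1 : (a : ℕ) < l
        · by_cases h2 : (b : ℕ) < l
          · rw [if_pos h1, if_pos h2] at hab
            exact Fin.ext hab
          · rw [if_pos h1, if_neg h2] at hab
            exfalso
            -- a < l, so a is in the second set: blk (σ a) = 1
            have ha1 : blk k l ((σ a : Fin (k + l + m)) : ℕ) = 1 := by
              rcases ha with h' | h'
              · omega
              · exact h'.2
            have hbk : k ≤ (b : ℕ) ∧ (b : ℕ) < k + l := by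
              rcases hb with h' | h' <;> omega
            have hne := hpair a b (by omega) (by omega)
            rcases hb with h' | h'
            · -- b in s-set: blk (σ (pre b)) ≠ 1, but pre b = a
              have : σ (pre k l m b) = σ a := hσpre b a (by rw [pre_val]; omega)
              rw [this] at h'
              exact h'.2.2.2 ha1
            · exact hne (ha1.trans h'.2.symm)
        · by_cases h2 : (b : ℕ) < l
          · rw [if_neg h1, if_pos h2] at hab
            exfalso
            have hb1 : blk k l ((σ b : Fin (k + l + m)) : ℕ) = 1 := by
              rcases hb with h' | h'
              · omega
              · exact h'.2
            have hak : k ≤ (a : ℕ) ∧ (a : ℕ) < k + l := by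
              rcases ha with h' | h' <;> omega
            have hne := hpair b a (by omega) (by omega)
            rcases ha with h' | h'
            · have : σ (pre k l m a) = σ b := hσpre a b (by rw [pre_val]; omega)
              rw [this] at h'
              exact h'.2.2.2 hb1
            · exact hne (hb1.trans h'.2.symm)
          · rw [if_neg h1, if_neg h2] at hab
            have hak : k ≤ (a : ℕ) := by rcases ha with h' | h' <;> omega
            have hbk : k ≤ (b : ℕ) := by rcases hb with h' | h' <;> omega
            exact Fin.ext (by omega)
    simpa only [Finset.card_range] using h1
  -- f5 : r + |D ∩ σ⁻¹(A₂)| ≤ k - l + m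
  have f5 : (univ.filter (fun i : Fin (k + l + m) =>
        ((l ≤ (i : ℕ) ∧ (i : ℕ) < k) ∨ k + l ≤ (i : ℕ)) ∧ ((σ i : Fin (k + l + m)) : ℕ) < k)).card
      + (univ.filter (fun i : Fin (k + l + m) =>
        ((l ≤ (i : ℕ) ∧ (i : ℕ) < k) ∨ k + l ≤ (i : ℕ)) ∧
          blk k l ((σ i : Fin (k + l + m)) : ℕ) = 1)).card ≤ k - l + m := by
    rw [← Finset.card_union_of_disjoint (by
      rw [Finset.disjoint_left]
      intro a ha hb
      simp only [Finset.mem_filter, Finset.mem_univ, true_and] at ha hb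
      have e1 := blk_eq_one_iff k l ((σ a : Fin (k + l + m)) : ℕ)
      omega)]
    rw [← hD]
    apply Finset.card_le_card
    intro x hx
    simp only [Finset.mem_union, Finset.mem_filter, Finset.mem_univ, true_and] at hx ⊢
    tauto
  constructor
  · omega
  · omega
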